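/- Let Λ be a full-rank lattice in ℝ^d (a discrete additive subgroup whose ℝ-span is ℝ^d), and let x ∈ ℝ^d. Then the set S = {s ∈ Λ : ‖x − s‖ ≤ ‖x − l‖ for all l ∈ Λ} of lattice points nearest to x is finite and has at most 2^d elements. -/

import Mathlib

set_option maxHeartbeats 1000000

/-- The Voronoi case of the main theorem: the set of points of a full-rank lattice
`Λ ⊆ ℝ^d` nearest to a given point `x` is finite and has at most `2 ^ d` elements. -/
theorem nearest_lattice_points_card_le (d : ℕ) (Λ : AddSubgroup (EuclideanSpace ℝ (Fin d)))
    [DiscreteTopology Λ]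
    (hfull : Submodule.span ℝ (Λ : Set (EuclideanSpace ℝ (Fin d))) = ⊤)
    (x : EuclideanSpace ℝ (Fin d)) :
    {s : EuclideanSpace ℝ (Fin d) | s ∈ Λ ∧ ∀ l ∈ Λ, ‖x - s‖ ≤ ‖x - l‖}.Finite ∧
      {s : EuclideanSpace ℝ (Fin d) | s ∈ Λ ∧ ∀ l ∈ Λ, ‖x - s‖ ≤ ‖x - l‖}.ncard ≤ 2 ^ d := by
  classical
  set L : Submodule ℤ (EuclideanSpace ℝ (Fin d)) := AddSubgroup.toIntSubmodule Λ with hL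
  haveI : DiscreteTopology L := ‹DiscreteTopology Λ›
  haveI : IsZLattice ℝ L := ⟨hfull⟩
  haveI : Module.Free ℤ L := ZLattice.module_free ℝ L
  haveI : Module.Finite ℤ L := ZLattice.module_finite ℝ L
  set ι := Module.Free.ChooseBasisIndex ℤ L
  set b : Module.Basis ι ℤ L := Module.Free.chooseBasis ℤ L
  have hcard : Fintype.card ι = d := by
    rw [← Module.finrank_eq_card_chooseBasisIndex, ZLattice.rank ℝ L,
      finrank_euclideanSpace_fin]
  set T : Set L := {l : L | ∀ m ∈ Λ, ‖x - (l : (EuclideanSpace ℝ (Fin d)))‖ ≤ ‖x - m‖} with hT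
  have hST : {s : (EuclideanSpace ℝ (Fin d)) | s ∈ Λ ∧ ∀ l ∈ Λ, ‖x - s‖ ≤ ‖x - l‖} = Subtype.val '' T := by
    ext s
    constructor
    · rintro ⟨hs, hmin⟩
      exact ⟨⟨s, hs⟩, hmin, rfl⟩
    · rintro ⟨⟨s, hs⟩, hmin, rfl⟩
      exact ⟨hs, hmin⟩
  set g : L → (ι → ZMod 2) := fun l i => ((b.repr l i : ℤ) : ZMod 2) with hg
  have hinj : Set.InjOn g T := by
    intro l hl l' hl' hgl
    -- each coordinate of `l - l'` is even
    have hdvd : ∀ i, (2 : ℤ) ∣ b.repr (l - l') i := by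
      intro i
      have : ((b.repr l i : ℤ) : ZMod 2) = ((b.repr l' i : ℤ) : ZMod 2) :=
        congrFun hgl i
      have h2 : (2 : ℤ) ∣ b.repr l i - b.repr l' i := by
        have := (ZMod.intCast_eq_intCast_iff' _ _ _).mp this
        exact Int.ModEq.dvd this.symm
      simpa [map_sub] using h2
    set t : L := b.repr.symm ((b.repr (l - l')).mapRange (· / 2) (by simp)) with ht
    have htwo : (2 : ℤ) • t = l - l' := by
      apply b.repr.injective
      rw [map_smul, ht, LinearEquiv.apply_symm_apply]
      ext i
      simp only [Finsupp.smul_apply, Finsupp.mapRange_apply, smul_eq_mul]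
      exact Int.mul_ediv_cancel' (hdvd i)
    -- geometric argument
    have hmemt : (t : (EuclideanSpace ℝ (Fin d))) ∈ Λ := t.2
    have hmeml' : (l' : (EuclideanSpace ℝ (Fin d))) ∈ Λ := l'.2
    set m : (EuclideanSpace ℝ (Fin d)) := (l' : (EuclideanSpace ℝ (Fin d))) + (t : (EuclideanSpace ℝ (Fin d))) with hm
    have hmΛ : m ∈ Λ := Λ.add_mem hmeml' hmemt
    have hll' : (l : (EuclideanSpace ℝ (Fin d))) - (l' : (EuclideanSpace ℝ (Fin d))) = (2 : ℝ) • (t : (EuclideanSpace ℝ (Fin d))) := by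
      have := congrArg (Subtype.val : L → (EuclideanSpace ℝ (Fin d))) htwo
      push_cast at this
      rw [← this]
      push_cast
      ring_nf
      norm_num [two_smul]
    have hrad : ‖x - (l : (EuclideanSpace ℝ (Fin d)))‖ = ‖x - (l' : (EuclideanSpace ℝ (Fin d)))‖ :=
      le_antisymm (hl _ hmeml') (hl' _ l.2)
    have hsum : (x - (l : (EuclideanSpace ℝ (Fin d)))) + (x - (l' : (EuclideanSpace ℝ (Fin d)))) = (2 : ℝ) • (x - m) := by
      rw [hm, two_smul]
      have : (l : (EuclideanSpace ℝ (Fin d))) = (l' : (EuclideanSpace ℝ (Fin d))) + (2 : ℝ) • (t : (EuclideanSpace ℝ (Fin d))) := by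
        rw [← hll']; abel
      rw [this, two_smul]
      abel
    have hmin : ‖x - (l : (EuclideanSpace ℝ (Fin d)))‖ ≤ ‖x - m‖ := hl _ hmΛ
    have hpar := parallelogram_law_with_norm ℝ (x - (l : (EuclideanSpace ℝ (Fin d)))) (x - (l' : (EuclideanSpace ℝ (Fin d))))
    have hnormsum : ‖(x - (l : (EuclideanSpace ℝ (Fin d)))) + (x - (l' : (EuclideanSpace ℝ (Fin d))))‖ = 2 * ‖x - m‖ := by
      rw [hsum, norm_smul]; simp
    have h5 : ‖x - (l : (EuclideanSpace ℝ (Fin d)))‖ * ‖x - (l : (EuclideanSpace ℝ (Fin d)))‖ ≤ ‖x - m‖ * ‖x - m‖ :=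
      mul_self_le_mul_self (norm_nonneg _) hmin
    have h6 : ‖(x - (l : (EuclideanSpace ℝ (Fin d)))) + (x - (l' : (EuclideanSpace ℝ (Fin d))))‖ * ‖(x - (l : (EuclideanSpace ℝ (Fin d)))) + (x - (l' : (EuclideanSpace ℝ (Fin d))))‖
        = 4 * (‖x - m‖ * ‖x - m‖) := by rw [hnormsum]; ring
    have hsub0 : ‖(x - (l : (EuclideanSpace ℝ (Fin d)))) - (x - (l' : (EuclideanSpace ℝ (Fin d))))‖ * ‖(x - (l : (EuclideanSpace ℝ (Fin d)))) - (x - (l' : (EuclideanSpace ℝ (Fin d))))‖ ≤ 0 := by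
      rw [← hrad] at hpar
      linarith
    have hsubzero : ‖(x - (l : (EuclideanSpace ℝ (Fin d)))) - (x - (l' : (EuclideanSpace ℝ (Fin d))))‖ = 0 :=
      le_antisymm (nonneg_le_nonneg_of_sq_le_sq (le_refl 0) (by simpa using hsub0)) (norm_nonneg _)
    have : (x - (l : (EuclideanSpace ℝ (Fin d)))) - (x - (l' : (EuclideanSpace ℝ (Fin d)))) = 0 := norm_eq_zero.mp hsubzero
    have hE : (l : (EuclideanSpace ℝ (Fin d))) = (l' : (EuclideanSpace ℝ (Fin d))) := by
      have h' : (l' : (EuclideanSpace ℝ (Fin d))) - (l : (EuclideanSpace ℝ (Fin d))) = 0 := by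
        rw [← this]; abel
      exact (sub_eq_zero.mp h').symm
    exact Subtype.ext hE
  have hTfin : T.Finite := Set.Finite.of_finite_image (Set.toFinite _) hinj
  have hSfin : ({s : (EuclideanSpace ℝ (Fin d)) | s ∈ Λ ∧ ∀ l ∈ Λ, ‖x - s‖ ≤ ‖x - l‖}).Finite := by
    rw [hST]; exact hTfin.image _
  refine ⟨hSfin, ?_⟩
  have h1 : ({s : (EuclideanSpace ℝ (Fin d)) | s ∈ Λ ∧ ∀ l ∈ Λ, ‖x - s‖ ≤ ‖x - l‖}).ncard = T.ncard := by
    rw [hST, Set.ncard_image_of_injective _ Subtype.val_injective]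
  have h2 : T.ncard = (g '' T).ncard := (Set.ncard_image_of_injOn hinj).symm
  have h3 : (g '' T).ncard ≤ (Set.univ : Set (ι → ZMod 2)).ncard :=
    Set.ncard_le_ncard (Set.subset_univ _) Set.finite_univ
  have h4 : (Set.univ : Set (ι → ZMod 2)).ncard = 2 ^ d := by
    rw [Set.ncard_univ, Nat.card_eq_fintype_card, Fintype.card_fun]
    simp [hcard]
  rw [h1, h2]
  exact h3.trans (le_of_eq h4)
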